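/- Strengthened weighted Poincaré inequality: There is a constant C > 0 such that for every C¹ function g on [-1,1] satisfying ∫_{-1}^{1} h_s(ξ) g(ξ) dξ = 0, one has ∫_{-1}^{1} |g(ξ)|² dξ ≤ C ∫_{-1}^{1} h_s(ξ) |g'(ξ)|² dξ. -/

import Mathlib

open Real Set intervalIntegral MeasureTheory

noncomputable def hs : ℝ → ℝ := fun x =>
  (Real.exp 1 ^ 2 + 1) / (Real.exp 1 ^ 2 - 1) -
    (Real.exp (x + 1) + Real.exp (1 - x)) / (Real.exp 1 ^ 2 - 1)

lemma e_gt_one : (1:ℝ) < Real.exp 1 := by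
  have := Real.exp_one_gt_d9; linarith

lemma e2_pos : (0:ℝ) < Real.exp 1 ^ 2 - 1 := by
  nlinarith [e_gt_one]

lemma cosh_key : ∀ x ∈ Icc (-1:ℝ) 1, Real.cosh x - x^2/2 ≤ Real.cosh 1 - 1/2 := by
  intro x hx
  have hmono : MonotoneOn (fun t => Real.cosh t - t^2/2) (Icc (0:ℝ) 1) := by
    apply monotoneOn_of_deriv_nonneg (convex_Icc 0 1)
    · exact (Real.continuous_cosh.sub (by continuity)).continuousOn
    · intro t ht
      exact ((Real.differentiable_cosh t).sub ((differentiable_pow 2 t).div_const 2)).differentiableWithinAt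
    · intro t ht
      rw [interior_Icc] at ht
      have hd : HasDerivAt (fun t => Real.cosh t - t^2/2) (Real.sinh t - t) t := by
        have h1 := (Real.hasDerivAt_cosh t).sub ((hasDerivAt_pow 2 t).div_const 2)
        exact h1.congr_deriv (by norm_num)
      rw [hd.deriv]
      have : t ≤ Real.sinh t := (Real.self_le_sinh_iff).2 ht.1.le
      linarith
  have h1 : Real.cosh |x| - |x|^2/2 ≤ Real.cosh 1 - 1^2/2 := by
    apply hmono ⟨abs_nonneg x, abs_le.2 ⟨hx.1, hx.2⟩⟩ ⟨by norm_num, le_refl 1⟩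
    exact abs_le.2 ⟨hx.1, hx.2⟩
  rw [Real.cosh_abs, sq_abs] at h1
  norm_num at h1 ⊢
  linarith

lemma hs_lower : ∀ x ∈ Icc (-1:ℝ) 1,
    Real.exp 1 / (Real.exp 1 ^ 2 - 1) * (1 - x^2) ≤ hs x := by
  intro x hx
  have he := e_gt_one
  have he2 := e2_pos
  have hck := cosh_key x hx
  have hc1 : Real.cosh 1 = (Real.exp 1 + (Real.exp 1)⁻¹)/2 := by
    rw [Real.cosh_eq, Real.exp_neg]
  have hcx : Real.cosh x = (Real.exp x + Real.exp (-x))/2 := Real.cosh_eq x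
  have hnum : Real.exp 1 * (1 - x^2) ≤
      (Real.exp 1 ^ 2 + 1) - (Real.exp (x+1) + Real.exp (1-x)) := by
    have h1 : Real.exp (x+1) = Real.exp 1 * Real.exp x := by
      rw [← Real.exp_add]; ring_nf
    have h2 : Real.exp (1-x) = Real.exp 1 * Real.exp (-x) := by
      rw [← Real.exp_add]; ring_nf
    have hepos : (0:ℝ) < Real.exp 1 := Real.exp_pos 1
    have hinv : Real.exp 1 * (Real.exp 1)⁻¹ = 1 := mul_inv_cancel₀ (ne_of_gt hepos)
    rw [h1, h2]
    nlinarith [hck, hc1, hcx]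
  show Real.exp 1 / (Real.exp 1 ^ 2 - 1) * (1 - x^2) ≤ hs x
  rw [hs, div_mul_eq_mul_div]
  show Real.exp 1 * (1 - x ^ 2) / (Real.exp 1 ^ 2 - 1) ≤ _
  rw [div_sub_div_same]
  gcongr

lemma cc_pos : (0:ℝ) < Real.exp 1 / (Real.exp 1 ^ 2 - 1) :=
  div_pos (Real.exp_pos 1) e2_pos

lemma hs_cont : Continuous hs := by
  unfold hs; fun_prop

lemma hs_pos : ∀ x ∈ Ioo (-1:ℝ) 1, 0 < hs x := by
  intro x hx
  have h1 := hs_lower x ⟨hx.1.le, hx.2.le⟩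
  have : 0 < 1 - x^2 := by nlinarith [hx.1, hx.2]
  nlinarith [cc_pos]

lemma hs_nonneg : ∀ x ∈ Icc (-1:ℝ) 1, 0 ≤ hs x := by
  intro x hx
  have h1 := hs_lower x hx
  have : 0 ≤ 1 - x^2 := by nlinarith [hx.1, hx.2]
  nlinarith [cc_pos]

lemma hs_upper : ∀ x : ℝ, hs x ≤ (Real.exp 1 ^ 2 + 1) / (Real.exp 1 ^ 2 - 1) := by
  intro x
  have h1 : 0 < (Real.exp (x + 1) + Real.exp (1 - x)) / (Real.exp 1 ^ 2 - 1) :=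
    div_pos (by positivity) e2_pos
  unfold hs; linarith

/-- Cauchy–Schwarz for interval integrals of continuous functions. -/
lemma cs {a b : ℝ} (hab : a ≤ b) {f h : ℝ → ℝ}
    (hf : ContinuousOn f (Icc a b)) (hh : ContinuousOn h (Icc a b)) :
    (∫ x in a..b, f x * h x)^2 ≤ (∫ x in a..b, f x^2) * (∫ x in a..b, h x^2) := by
  have huIcc : uIcc a b = Icc a b := uIcc_of_le hab
  have hf' : ContinuousOn f (uIcc a b) := huIcc ▸ hf
  have hh' : ContinuousOn h (uIcc a b) := huIcc ▸ hh
  have hif : IntervalIntegrable (fun x => f x^2) volume a b :=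
    (hf'.pow 2).intervalIntegrable
  have hih : IntervalIntegrable (fun x => h x^2) volume a b :=
    (hh'.pow 2).intervalIntegrable
  have hifh : IntervalIntegrable (fun x => f x * h x) volume a b :=
    (hf'.mul hh').intervalIntegrable
  set A := ∫ x in a..b, f x^2 with hA
  set B := ∫ x in a..b, h x^2 with hB
  set Cv := ∫ x in a..b, f x * h x with hC
  have key : ∀ t : ℝ, 0 ≤ A * (t * t) + (-2*Cv) * t + B := by
    intro t
    have h0 : 0 ≤ ∫ x in a..b, (t * f x - h x)^2 :=
      intervalIntegral.integral_nonneg hab (fun u _ => sq_nonneg _)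
    have hexp : (∫ x in a..b, (t * f x - h x)^2)
        = t^2 * A - 2*t*Cv + B := by
      have : (fun x => (t * f x - h x)^2)
          = fun x => t^2 * (f x^2) - 2*t*(f x * h x) + h x^2 := by
        funext x; ring
      rw [this, hA, hB, hC]
      rw [intervalIntegral.integral_add (((hif.const_mul _).sub (hifh.const_mul _))) hih,
        intervalIntegral.integral_sub (hif.const_mul _) (hifh.const_mul _),
        intervalIntegral.integral_const_mul, intervalIntegral.integral_const_mul]
    nlinarith [h0, hexp]
  have hd := discrim_le_zero key
  rw [discrim] at hd
  nlinarith [hd]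

/-- continuity of the comparison kernels away from the singularity -/
lemma cont_m {s : Set ℝ} (h1 : ∀ t ∈ s, t < 1) (r : ℝ) :
    ContinuousOn (fun t : ℝ => (1-t) ^ (r:ℝ)) s := by
  apply ContinuousOn.rpow_const (by fun_prop)
  intro t ht; exact Or.inl (by have := h1 t ht; intro hc; linarith [sub_eq_zero.mp hc])

lemma cont_p {s : Set ℝ} (h1 : ∀ t ∈ s, -1 < t) (r : ℝ) :
    ContinuousOn (fun t : ℝ => (1+t) ^ (r:ℝ)) s := by
  apply ContinuousOn.rpow_const (by fun_prop)
  intro t ht; exact Or.inl (by have := h1 t ht; intro hc; nlinarith [hc])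

lemma psi_integral : ∀ x ∈ Ioo (-1:ℝ) 1,
    (∫ t in (0:ℝ)..x, ((1-t) ^ (-3/2 : ℝ) + (1+t) ^ (-3/2 : ℝ)))
      = (2*(1-x) ^ (-1/2:ℝ) - 2) + (2 - 2*(1+x) ^ (-1/2:ℝ)) := by
  intro x hx
  have hsub : uIcc (0:ℝ) x ⊆ Ioo (-1:ℝ) 1 :=
    (ordConnected_Ioo).uIcc_subset (by constructor <;> norm_num) hx
  have hc1 : ContinuousOn (fun t : ℝ => (1-t) ^ (-3/2 : ℝ)) (uIcc (0:ℝ) x) :=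
    cont_m (fun t ht => (hsub ht).2) _
  have hc2 : ContinuousOn (fun t : ℝ => (1+t) ^ (-3/2 : ℝ)) (uIcc (0:ℝ) x) :=
    cont_p (fun t ht => (hsub ht).1) _
  rw [intervalIntegral.integral_add hc1.intervalIntegrable hc2.intervalIntegrable]
  have h1x : (0:ℝ) < 1 - x := by linarith [hx.2]
  have h2x : (0:ℝ) < 1 + x := by linarith [hx.1]
  have e1 : (∫ t in (0:ℝ)..x, (1-t) ^ (-3/2 : ℝ)) = 2*(1-x) ^ (-1/2:ℝ) - 2 := by
    have hcs := intervalIntegral.integral_comp_sub_left (a := (0:ℝ)) (b := x)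
      (fun u : ℝ => u ^ (-3/2 : ℝ)) 1
    rw [sub_zero] at hcs
    rw [hcs, integral_rpow (Or.inr ⟨by norm_num, by
      intro hc
      rcases le_total ((1:ℝ)-x) 1 with hle | hle
      · rw [uIcc_of_le hle] at hc; linarith [hc.1]
      · rw [uIcc_of_ge hle] at hc; linarith [hc.1]⟩)]
    rw [show (-3/2 : ℝ) + 1 = -1/2 by norm_num, Real.one_rpow]
    ring
  have e2 : (∫ t in (0:ℝ)..x, (1+t) ^ (-3/2 : ℝ)) = 2 - 2*(1+x) ^ (-1/2:ℝ) := by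
    have hcs := intervalIntegral.integral_comp_add_left (a := (0:ℝ)) (b := x)
      (fun u : ℝ => u ^ (-3/2 : ℝ)) 1
    rw [add_zero] at hcs
    rw [hcs, integral_rpow (Or.inr ⟨by norm_num, by
      intro hc
      rcases le_total (1:ℝ) (1+x) with hle | hle
      · rw [uIcc_of_le hle] at hc; linarith [hc.1]
      · rw [uIcc_of_ge hle] at hc; linarith [hc.1]⟩)]
    rw [show (-3/2 : ℝ) + 1 = -1/2 by norm_num, Real.one_rpow]
    ring
  rw [e1, e2]

lemma hs_inv_le : ∀ t ∈ Ioo (-1:ℝ) 1, (hs t)⁻¹ ≤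
    (Real.exp 1 / (Real.exp 1 ^ 2 - 1))⁻¹ * ((1-t) ^ (-3/2:ℝ) + (1+t) ^ (-3/2:ℝ)) := by
  intro t ht
  have h1t : (0:ℝ) < 1 - t := by linarith [ht.2]
  have h2t : (0:ℝ) < 1 + t := by linarith [ht.1]
  have hl := hs_lower t ⟨ht.1.le, ht.2.le⟩
  have hq : (0:ℝ) < 1 - t^2 := by nlinarith
  have hden : (0:ℝ) < Real.exp 1 / (Real.exp 1 ^ 2 - 1) * (1 - t^2) :=
    mul_pos cc_pos hq
  have step1 : (hs t)⁻¹ ≤ (Real.exp 1 / (Real.exp 1 ^ 2 - 1) * (1 - t^2))⁻¹ :=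
    inv_anti₀ hden hl
  have step3 : (1 - t^2)⁻¹ ≤ (1-t) ^ (-3/2:ℝ) + (1+t) ^ (-3/2:ℝ) := by
    rcases le_total 0 t with h0 | h0
    · have hle : 1 - t ≤ 1 - t^2 := by nlinarith
      have i1 : (1 - t^2)⁻¹ ≤ (1 - t)⁻¹ := inv_anti₀ h1t hle
      have i2 : (1 - t)⁻¹ ≤ (1-t) ^ (-3/2:ℝ) := by
        rw [← Real.rpow_neg_one]
        exact Real.rpow_le_rpow_of_exponent_ge h1t (by linarith) (by norm_num)
      have i3 : (0:ℝ) ≤ (1+t) ^ (-3/2:ℝ) := Real.rpow_nonneg h2t.le _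
      linarith
    · have hle : 1 + t ≤ 1 - t^2 := by nlinarith
      have i1 : (1 - t^2)⁻¹ ≤ (1 + t)⁻¹ := inv_anti₀ h2t hle
      have i2 : (1 + t)⁻¹ ≤ (1+t) ^ (-3/2:ℝ) := by
        rw [← Real.rpow_neg_one]
        exact Real.rpow_le_rpow_of_exponent_ge h2t (by linarith) (by norm_num)
      have i3 : (0:ℝ) ≤ (1-t) ^ (-3/2:ℝ) := Real.rpow_nonneg h1t.le _
      linarith
  calc (hs t)⁻¹ ≤ (Real.exp 1 / (Real.exp 1 ^ 2 - 1) * (1 - t^2))⁻¹ := step1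
    _ = (Real.exp 1 / (Real.exp 1 ^ 2 - 1))⁻¹ * (1 - t^2)⁻¹ := by rw [mul_inv]
    _ ≤ _ := by
        apply mul_le_mul_of_nonneg_left step3 (le_of_lt (inv_pos.2 cc_pos))

lemma phi_m_integrable : IntervalIntegrable (fun x : ℝ => (1-x) ^ (-1/2:ℝ)) volume (-1) 1 := by
  have h := intervalIntegrable_rpow' (a := (0:ℝ)) (b := 2)
    (show (-1:ℝ) < -1/2 by norm_num)
  have h2 := h.comp_sub_left 1
  norm_num at h2
  convert h2.symm using 2 with x
  norm_num

lemma phi_p_integrable : IntervalIntegrable (fun x : ℝ => (1+x) ^ (-1/2:ℝ)) volume (-1) 1 := by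
  have h := intervalIntegrable_rpow' (a := (0:ℝ)) (b := 2)
    (show (-1:ℝ) < -1/2 by norm_num)
  have h2 := h.comp_add_left 1
  norm_num at h2
  convert h2 using 2 with x
  norm_num

noncomputable def Phi : ℝ → ℝ := fun x =>
  2 * (Real.exp 1 / (Real.exp 1 ^ 2 - 1))⁻¹ * ((1-x) ^ (-1/2:ℝ) + (1+x) ^ (-1/2:ℝ))

lemma Phi_integrable : IntervalIntegrable Phi volume (-1) 1 :=
  (phi_m_integrable.add phi_p_integrable).const_mul _

lemma Phi_nonneg : ∀ x ∈ Icc (-1:ℝ) 1, 0 ≤ Phi x := by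
  intro x hx
  have h1 : (0:ℝ) ≤ 1 - x := by linarith [hx.2]
  have h2 : (0:ℝ) ≤ 1 + x := by linarith [hx.1]
  have := cc_pos
  exact mul_nonneg (by positivity)
    (add_nonneg (Real.rpow_nonneg h1 _) (Real.rpow_nonneg h2 _))

lemma inv_int_le_Phi_right {x : ℝ} (hx : x ∈ Ioo (-1:ℝ) 1) (hx0 : 0 ≤ x) :
    (∫ t in (0:ℝ)..x, (hs t)⁻¹) ≤ Phi x := by
  have h1x : (0:ℝ) < 1 - x := by linarith [hx.2]
  have h2x : (0:ℝ) < 1 + x := by linarith [hx.1]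
  have hsub : Icc (0:ℝ) x ⊆ Ioo (-1:ℝ) 1 := fun t ht =>
    ⟨by linarith [ht.1], by linarith [ht.2, hx.2]⟩
  have huIcc : uIcc (0:ℝ) x = Icc 0 x := uIcc_of_le hx0
  have hinvc : ContinuousOn (fun t => (hs t)⁻¹) (uIcc (0:ℝ) x) := by
    rw [huIcc]
    exact hs_cont.continuousOn.inv₀ (fun t ht => (hs_pos t (hsub ht)).ne')
  have hpsic : ContinuousOn
      (fun t : ℝ => (Real.exp 1 / (Real.exp 1 ^ 2 - 1))⁻¹ *
        ((1-t) ^ (-3/2:ℝ) + (1+t) ^ (-3/2:ℝ))) (uIcc (0:ℝ) x) := by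
    rw [huIcc]
    exact continuousOn_const.mul ((cont_m (fun t ht => (hsub ht).2) _).add
      (cont_p (fun t ht => (hsub ht).1) _))
  have hmono : (∫ t in (0:ℝ)..x, (hs t)⁻¹) ≤
      ∫ t in (0:ℝ)..x, (Real.exp 1 / (Real.exp 1 ^ 2 - 1))⁻¹ *
        ((1-t) ^ (-3/2:ℝ) + (1+t) ^ (-3/2:ℝ)) := by
    apply intervalIntegral.integral_mono_on hx0 hinvc.intervalIntegrable
      hpsic.intervalIntegrable
    intro t ht
    exact hs_inv_le t (hsub ht)
  have hval : (∫ t in (0:ℝ)..x, (Real.exp 1 / (Real.exp 1 ^ 2 - 1))⁻¹ *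
        ((1-t) ^ (-3/2:ℝ) + (1+t) ^ (-3/2:ℝ)))
      = (Real.exp 1 / (Real.exp 1 ^ 2 - 1))⁻¹ *
        ((2*(1-x) ^ (-1/2:ℝ) - 2) + (2 - 2*(1+x) ^ (-1/2:ℝ))) := by
    rw [intervalIntegral.integral_const_mul, psi_integral x hx]
  have r1 : (0:ℝ) ≤ (1+x) ^ (-1/2:ℝ) := Real.rpow_nonneg h2x.le _
  have r2 : (0:ℝ) ≤ (1-x) ^ (-1/2:ℝ) := Real.rpow_nonneg h1x.le _
  have hcci : (0:ℝ) < (Real.exp 1 / (Real.exp 1 ^ 2 - 1))⁻¹ := inv_pos.2 cc_pos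
  rw [hval] at hmono
  refine hmono.trans ?_
  unfold Phi
  nlinarith [hcci, r1, r2]

lemma inv_int_le_Phi_left {x : ℝ} (hx : x ∈ Ioo (-1:ℝ) 1) (hx0 : x ≤ 0) :
    (∫ t in x..(0:ℝ), (hs t)⁻¹) ≤ Phi x := by
  have h1x : (0:ℝ) < 1 - x := by linarith [hx.2]
  have h2x : (0:ℝ) < 1 + x := by linarith [hx.1]
  have hsub : Icc x (0:ℝ) ⊆ Ioo (-1:ℝ) 1 := fun t ht =>
    ⟨by linarith [ht.1, hx.1], by linarith [ht.2]⟩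
  have huIcc : uIcc x (0:ℝ) = Icc x 0 := uIcc_of_le hx0
  have hinvc : ContinuousOn (fun t => (hs t)⁻¹) (uIcc x (0:ℝ)) := by
    rw [huIcc]
    exact hs_cont.continuousOn.inv₀ (fun t ht => (hs_pos t (hsub ht)).ne')
  have hpsic : ContinuousOn
      (fun t : ℝ => (Real.exp 1 / (Real.exp 1 ^ 2 - 1))⁻¹ *
        ((1-t) ^ (-3/2:ℝ) + (1+t) ^ (-3/2:ℝ))) (uIcc x (0:ℝ)) := by
    rw [huIcc]
    exact continuousOn_const.mul ((cont_m (fun t ht => (hsub ht).2) _).add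
      (cont_p (fun t ht => (hsub ht).1) _))
  have hmono : (∫ t in x..(0:ℝ), (hs t)⁻¹) ≤
      ∫ t in x..(0:ℝ), (Real.exp 1 / (Real.exp 1 ^ 2 - 1))⁻¹ *
        ((1-t) ^ (-3/2:ℝ) + (1+t) ^ (-3/2:ℝ)) := by
    apply intervalIntegral.integral_mono_on hx0 hinvc.intervalIntegrable
      hpsic.intervalIntegrable
    intro t ht
    exact hs_inv_le t (hsub ht)
  have hval : (∫ t in x..(0:ℝ), (Real.exp 1 / (Real.exp 1 ^ 2 - 1))⁻¹ *
        ((1-t) ^ (-3/2:ℝ) + (1+t) ^ (-3/2:ℝ)))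
      = -((Real.exp 1 / (Real.exp 1 ^ 2 - 1))⁻¹ *
        ((2*(1-x) ^ (-1/2:ℝ) - 2) + (2 - 2*(1+x) ^ (-1/2:ℝ)))) := by
    rw [intervalIntegral.integral_symm, intervalIntegral.integral_const_mul,
      psi_integral x hx]
  have r1 : (0:ℝ) ≤ (1+x) ^ (-1/2:ℝ) := Real.rpow_nonneg h2x.le _
  have r2 : (0:ℝ) ≤ (1-x) ^ (-1/2:ℝ) := Real.rpow_nonneg h1x.le _
  have hcci : (0:ℝ) < (Real.exp 1 / (Real.exp 1 ^ 2 - 1))⁻¹ := inv_pos.2 cc_pos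
  rw [hval] at hmono
  refine hmono.trans ?_
  unfold Phi
  nlinarith [hcci, r1, r2]

lemma hub_lemma {g : ℝ → ℝ} (hg : ContDiffOn ℝ 1 g (Icc (-1:ℝ) 1))
    (hEint : IntervalIntegrable (fun ξ => hs ξ * (deriv g ξ)^2) volume (-1) 1) :
    ∀ x ∈ Ioo (-1:ℝ) 1, (g x - g 0)^2 ≤
      (∫ ξ in (-1:ℝ)..1, hs ξ * (deriv g ξ)^2) * Phi x := by
  have huni : UniqueDiffOn ℝ (Icc (-1:ℝ) 1) := uniqueDiffOn_Icc (by norm_num)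
  have hDcont : ContinuousOn (derivWithin g (Icc (-1:ℝ) 1)) (Icc (-1:ℝ) 1) :=
    hg.continuousOn_derivWithin huni le_rfl
  have hderiv_eq : EqOn (deriv g) (derivWithin g (Icc (-1:ℝ) 1)) (Ioo (-1:ℝ) 1) :=
    fun x hx => (derivWithin_of_mem_nhds (Icc_mem_nhds hx.1 hx.2)).symm
  have hdc : ContinuousOn (deriv g) (Ioo (-1:ℝ) 1) :=
    (hDcont.mono Ioo_subset_Icc_self).congr hderiv_eq
  have hdiff : ∀ x ∈ Ioo (-1:ℝ) 1, DifferentiableAt ℝ g x := fun x hx =>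
    (hg.contDiffAt (Icc_mem_nhds hx.1 hx.2)).differentiableAt one_ne_zero
  have h0mem : (0:ℝ) ∈ Ioo (-1:ℝ) 1 := by norm_num
  set E : ℝ := ∫ ξ in (-1:ℝ)..1, hs ξ * (deriv g ξ)^2 with hE
  have hEnn : 0 ≤ E := intervalIntegral.integral_nonneg (by norm_num)
    (fun u hu => mul_nonneg (hs_nonneg u hu) (sq_nonneg _))
  have hnnae : 0 ≤ᵐ[volume.restrict (Ioc (-1:ℝ) 1)] fun ξ => hs ξ * (deriv g ξ)^2 := by
    filter_upwards [ae_restrict_mem measurableSet_Ioc] with t ht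
    exact mul_nonneg (hs_nonneg t ⟨ht.1.le, ht.2⟩) (sq_nonneg _)
  intro x hx
  have hFTC : ∀ p q : ℝ, p ∈ Ioo (-1:ℝ) 1 → q ∈ Ioo (-1:ℝ) 1 →
      (∫ t in p..q, deriv g t) = g q - g p := by
    intro p q hp hq
    have hsub : uIcc p q ⊆ Ioo (-1:ℝ) 1 := (ordConnected_Ioo).uIcc_subset hp hq
    exact intervalIntegral.integral_deriv_eq_sub (fun t ht => hdiff t (hsub ht))
      ((hdc.mono hsub).intervalIntegrable)
  have hsqc : ContinuousOn (fun t => Real.sqrt (hs t)) (Ioo (-1:ℝ) 1) :=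
    (Real.continuous_sqrt.comp hs_cont).continuousOn
  rcases le_total 0 x with hx0 | hx0
  · have hsubI : Icc (0:ℝ) x ⊆ Ioo (-1:ℝ) 1 := fun t ht =>
      ⟨by linarith [ht.1], by linarith [ht.2, hx.2]⟩
    have hfc : ContinuousOn (fun t => Real.sqrt (hs t) * deriv g t) (Icc (0:ℝ) x) :=
      (hsqc.mono hsubI).mul (hdc.mono hsubI)
    have hhzero : ∀ t ∈ Icc (0:ℝ) x, Real.sqrt (hs t) ≠ 0 := fun t ht =>
      (Real.sqrt_pos.2 (hs_pos t (hsubI ht))).ne'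
    have hhc : ContinuousOn (fun t => (Real.sqrt (hs t))⁻¹) (Icc (0:ℝ) x) :=
      (hsqc.mono hsubI).inv₀ hhzero
    have hCS := cs hx0 hfc hhc
    have huIcc : uIcc (0:ℝ) x = Icc 0 x := uIcc_of_le hx0
    have e1 : (∫ t in (0:ℝ)..x, (Real.sqrt (hs t) * deriv g t) * (Real.sqrt (hs t))⁻¹)
        = ∫ t in (0:ℝ)..x, deriv g t := by
      apply intervalIntegral.integral_congr
      intro t ht
      rw [huIcc] at ht
      show Real.sqrt (hs t) * deriv g t * (Real.sqrt (hs t))⁻¹ = deriv g t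
      rw [mul_comm (Real.sqrt (hs t)) (deriv g t), mul_inv_cancel_right₀ (hhzero t ht)]
    have e2 : (∫ t in (0:ℝ)..x, (Real.sqrt (hs t) * deriv g t)^2)
        = ∫ t in (0:ℝ)..x, hs t * (deriv g t)^2 := by
      apply intervalIntegral.integral_congr
      intro t ht
      rw [huIcc] at ht
      simp only [mul_pow]; rw [Real.sq_sqrt (hs_nonneg t (Ioo_subset_Icc_self (hsubI ht)))]
    have e3 : (∫ t in (0:ℝ)..x, ((Real.sqrt (hs t))⁻¹)^2)
        = ∫ t in (0:ℝ)..x, (hs t)⁻¹ := by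
      apply intervalIntegral.integral_congr
      intro t ht
      rw [huIcc] at ht
      simp only [inv_pow]; rw [Real.sq_sqrt (hs_nonneg t (Ioo_subset_Icc_self (hsubI ht)))]
    rw [e1, e2, e3] at hCS
    have hb1 : (∫ t in (0:ℝ)..x, hs t * (deriv g t)^2) ≤ E :=
      intervalIntegral.integral_mono_interval (by norm_num) hx0 hx.2.le hnnae hEint
    have hb2 : (∫ t in (0:ℝ)..x, (hs t)⁻¹) ≤ Phi x := inv_int_le_Phi_right hx hx0
    have hI2nn : 0 ≤ ∫ t in (0:ℝ)..x, (hs t)⁻¹ :=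
      intervalIntegral.integral_nonneg hx0
        (fun t ht => inv_nonneg.2 (hs_nonneg t (Ioo_subset_Icc_self (hsubI ht))))
    calc (g x - g 0)^2 = (∫ t in (0:ℝ)..x, deriv g t)^2 := by
          rw [hFTC 0 x h0mem hx]
      _ ≤ (∫ t in (0:ℝ)..x, hs t * (deriv g t)^2) * (∫ t in (0:ℝ)..x, (hs t)⁻¹) := hCS
      _ ≤ E * Phi x := mul_le_mul hb1 hb2 hI2nn hEnn
  · have hsubI : Icc x (0:ℝ) ⊆ Ioo (-1:ℝ) 1 := fun t ht =>
      ⟨by linarith [ht.1, hx.1], by linarith [ht.2]⟩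
    have hfc : ContinuousOn (fun t => Real.sqrt (hs t) * deriv g t) (Icc x (0:ℝ)) :=
      (hsqc.mono hsubI).mul (hdc.mono hsubI)
    have hhzero : ∀ t ∈ Icc x (0:ℝ), Real.sqrt (hs t) ≠ 0 := fun t ht =>
      (Real.sqrt_pos.2 (hs_pos t (hsubI ht))).ne'
    have hhc : ContinuousOn (fun t => (Real.sqrt (hs t))⁻¹) (Icc x (0:ℝ)) :=
      (hsqc.mono hsubI).inv₀ hhzero
    have hCS := cs hx0 hfc hhc
    have huIcc : uIcc x (0:ℝ) = Icc x 0 := uIcc_of_le hx0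
    have e1 : (∫ t in x..(0:ℝ), (Real.sqrt (hs t) * deriv g t) * (Real.sqrt (hs t))⁻¹)
        = ∫ t in x..(0:ℝ), deriv g t := by
      apply intervalIntegral.integral_congr
      intro t ht
      rw [huIcc] at ht
      show Real.sqrt (hs t) * deriv g t * (Real.sqrt (hs t))⁻¹ = deriv g t
      rw [mul_comm (Real.sqrt (hs t)) (deriv g t), mul_inv_cancel_right₀ (hhzero t ht)]
    have e2 : (∫ t in x..(0:ℝ), (Real.sqrt (hs t) * deriv g t)^2)
        = ∫ t in x..(0:ℝ), hs t * (deriv g t)^2 := by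
      apply intervalIntegral.integral_congr
      intro t ht
      rw [huIcc] at ht
      simp only [mul_pow]; rw [Real.sq_sqrt (hs_nonneg t (Ioo_subset_Icc_self (hsubI ht)))]
    have e3 : (∫ t in x..(0:ℝ), ((Real.sqrt (hs t))⁻¹)^2)
        = ∫ t in x..(0:ℝ), (hs t)⁻¹ := by
      apply intervalIntegral.integral_congr
      intro t ht
      rw [huIcc] at ht
      simp only [inv_pow]; rw [Real.sq_sqrt (hs_nonneg t (Ioo_subset_Icc_self (hsubI ht)))]
    rw [e1, e2, e3] at hCS
    have hb1 : (∫ t in x..(0:ℝ), hs t * (deriv g t)^2) ≤ E :=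
      intervalIntegral.integral_mono_interval hx.1.le hx0 (by norm_num) hnnae hEint
    have hb2 : (∫ t in x..(0:ℝ), (hs t)⁻¹) ≤ Phi x := inv_int_le_Phi_left hx hx0
    have hI2nn : 0 ≤ ∫ t in x..(0:ℝ), (hs t)⁻¹ :=
      intervalIntegral.integral_nonneg hx0
        (fun t ht => inv_nonneg.2 (hs_nonneg t (Ioo_subset_Icc_self (hsubI ht))))
    have hflip : (g x - g 0)^2 = (g 0 - g x)^2 := by ring
    calc (g x - g 0)^2 = (∫ t in x..(0:ℝ), deriv g t)^2 := by
          rw [hFTC x 0 hx h0mem, hflip]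
      _ ≤ (∫ t in x..(0:ℝ), hs t * (deriv g t)^2) * (∫ t in x..(0:ℝ), (hs t)⁻¹) := hCS
      _ ≤ E * Phi x := mul_le_mul hb1 hb2 hI2nn hEnn

lemma ae_ne (c : ℝ) : ∀ᵐ ξ ∂(volume : Measure ℝ), ξ ≠ c := by
  have h : {a : ℝ | ¬ a ≠ c} = {c} := by ext a; simp
  rw [MeasureTheory.ae_iff, h]
  exact Real.volume_singleton

theorem stmt_8 :
    ∃ C > (0 : ℝ), ∀ g : ℝ → ℝ, ContDiffOn ℝ 1 g (Set.Icc (-1 : ℝ) 1) →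
      (∫ ξ in (-1 : ℝ)..1, hs ξ * g ξ) = 0 →
      ∫ ξ in (-1 : ℝ)..1, (g ξ) ^ 2 ≤
        C * ∫ ξ in (-1 : ℝ)..1, hs ξ * (deriv g ξ) ^ 2 := by
  set K : ℝ := (Real.exp 1 ^ 2 + 1) / (Real.exp 1 ^ 2 - 1) with hK
  have hKpos : 0 < K := div_pos (by positivity) e2_pos
  set IP : ℝ := ∫ x in (-1:ℝ)..1, Phi x with hIP
  have hIPnn : 0 ≤ IP := intervalIntegral.integral_nonneg (by norm_num) Phi_nonneg
  have hMint : IntervalIntegrable hs volume (-1) 1 := by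
    apply hs_cont.continuousOn.intervalIntegrable
  set M : ℝ := ∫ x in (-1:ℝ)..1, hs x with hMdef
  have hM : 0 < M :=
    intervalIntegral.intervalIntegral_pos_of_pos_on hMint hs_pos (by norm_num)
  refine ⟨4*K*IP/M + 2*IP + 1, ?_, ?_⟩
  · have h1 : 0 ≤ 4*K*IP/M := div_nonneg (by positivity) hM.le
    linarith
  intro g hg hmean
  have huni : UniqueDiffOn ℝ (Icc (-1:ℝ) 1) := uniqueDiffOn_Icc (by norm_num)
  have hDcont : ContinuousOn (derivWithin g (Icc (-1:ℝ) 1)) (Icc (-1:ℝ) 1) :=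
    hg.continuousOn_derivWithin huni le_rfl
  have hderiv_eq : EqOn (deriv g) (derivWithin g (Icc (-1:ℝ) 1)) (Ioo (-1:ℝ) 1) :=
    fun x hx => (derivWithin_of_mem_nhds (Icc_mem_nhds hx.1 hx.2)).symm
  have hgc : ContinuousOn g (Icc (-1:ℝ) 1) := hg.continuousOn
  -- integrability of the weighted derivative square
  have hEint : IntervalIntegrable (fun ξ => hs ξ * (deriv g ξ)^2) volume (-1) 1 := by
    have hDi : IntervalIntegrable (fun ξ => hs ξ * (derivWithin g (Icc (-1:ℝ) 1) ξ)^2)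
        volume (-1) 1 := by
      apply ContinuousOn.intervalIntegrable
      rw [uIcc_of_le (by norm_num : (-1:ℝ) ≤ 1)]
      exact hs_cont.continuousOn.mul (hDcont.pow 2)
    rw [intervalIntegrable_iff_integrableOn_Ioc_of_le (by norm_num : (-1:ℝ) ≤ 1)] at hDi ⊢
    apply hDi.congr
    filter_upwards [ae_restrict_mem measurableSet_Ioc, ae_restrict_of_ae (ae_ne 1)]
      with ξ h1 h2
    have hio : ξ ∈ Ioo (-1:ℝ) 1 := ⟨h1.1, lt_of_le_of_ne h1.2 h2⟩
    rw [hderiv_eq hio]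
  set E : ℝ := ∫ ξ in (-1:ℝ)..1, hs ξ * (deriv g ξ)^2 with hE
  have hEnn : 0 ≤ E := intervalIntegral.integral_nonneg (by norm_num)
    (fun u hu => mul_nonneg (hs_nonneg u hu) (sq_nonneg _))
  have hub := hub_lemma hg hEint
  rw [← hE] at hub
  -- the weighted mean of (g 0 - g)
  have hsqc : ContinuousOn (fun ξ => Real.sqrt (hs ξ)) (Icc (-1:ℝ) 1) :=
    (Real.continuous_sqrt.comp hs_cont).continuousOn
  have hdiffc : ContinuousOn (fun ξ => Real.sqrt (hs ξ) * (g 0 - g ξ)) (Icc (-1:ℝ) 1) :=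
    hsqc.mul (continuousOn_const.sub hgc)
  have hCS2 := cs (by norm_num : (-1:ℝ) ≤ 1) hsqc hdiffc
  have huIcc2 : uIcc (-1:ℝ) 1 = Icc (-1) 1 := uIcc_of_le (by norm_num)
  have f1 : (∫ ξ in (-1:ℝ)..1, Real.sqrt (hs ξ) * (Real.sqrt (hs ξ) * (g 0 - g ξ)))
      = M * g 0 := by
    have hcongr : EqOn (fun ξ => Real.sqrt (hs ξ) * (Real.sqrt (hs ξ) * (g 0 - g ξ)))
        (fun ξ => hs ξ * g 0 - hs ξ * g ξ) (uIcc (-1:ℝ) 1) := by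
      intro ξ hξ
      rw [huIcc2] at hξ
      show Real.sqrt (hs ξ) * (Real.sqrt (hs ξ) * (g 0 - g ξ)) = hs ξ * g 0 - hs ξ * g ξ
      rw [← mul_assoc, Real.mul_self_sqrt (hs_nonneg ξ hξ)]
      ring
    rw [intervalIntegral.integral_congr hcongr]
    have hi1 : IntervalIntegrable (fun ξ => hs ξ * g 0) volume (-1) 1 :=
      hMint.mul_const _
    have hi2 : IntervalIntegrable (fun ξ => hs ξ * g ξ) volume (-1) 1 := by
      apply ContinuousOn.intervalIntegrable
      rw [huIcc2]
      exact hs_cont.continuousOn.mul hgc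
    rw [intervalIntegral.integral_sub hi1 hi2, hmean,
      intervalIntegral.integral_mul_const]
    simp [hMdef]
  have f2 : (∫ ξ in (-1:ℝ)..1, (Real.sqrt (hs ξ))^2) = M := by
    have hcongr : EqOn (fun ξ => (Real.sqrt (hs ξ))^2) hs (uIcc (-1:ℝ) 1) := by
      intro ξ hξ
      rw [huIcc2] at hξ
      exact Real.sq_sqrt (hs_nonneg ξ hξ)
    rw [intervalIntegral.integral_congr hcongr]
  have f3 : (∫ ξ in (-1:ℝ)..1, (Real.sqrt (hs ξ) * (g 0 - g ξ))^2)
      = ∫ ξ in (-1:ℝ)..1, hs ξ * (g 0 - g ξ)^2 := by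
    apply intervalIntegral.integral_congr
    intro ξ hξ
    rw [huIcc2] at hξ
    show (Real.sqrt (hs ξ) * (g 0 - g ξ))^2 = hs ξ * (g 0 - g ξ)^2
    rw [mul_pow, Real.sq_sqrt (hs_nonneg ξ hξ)]
  rw [f1, f2, f3] at hCS2
  set A : ℝ := ∫ ξ in (-1:ℝ)..1, hs ξ * (g 0 - g ξ)^2 with hA
  -- bound A
  have hAle : A ≤ K * E * IP := by
    have hint1 : IntervalIntegrable (fun ξ => hs ξ * (g 0 - g ξ)^2) volume (-1) 1 := by
      apply ContinuousOn.intervalIntegrable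
      rw [huIcc2]
      exact hs_cont.continuousOn.mul ((continuousOn_const.sub hgc).pow 2)
    have hint2 : IntervalIntegrable (fun ξ => K * E * Phi ξ) volume (-1) 1 :=
      Phi_integrable.const_mul _
    have hae : (fun ξ => hs ξ * (g 0 - g ξ)^2)
        ≤ᵐ[volume.restrict (Icc (-1:ℝ) 1)] fun ξ => K * E * Phi ξ := by
      filter_upwards [ae_restrict_mem measurableSet_Icc, ae_restrict_of_ae (ae_ne 1),
        ae_restrict_of_ae (ae_ne (-1))] with ξ h1 h2 h3
      have hio : ξ ∈ Ioo (-1:ℝ) 1 :=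
        ⟨lt_of_le_of_ne h1.1 (Ne.symm h3), lt_of_le_of_ne h1.2 h2⟩
      have hu := hub ξ hio
      have h4 : (g 0 - g ξ)^2 = (g ξ - g 0)^2 := by ring
      calc hs ξ * (g 0 - g ξ)^2 ≤ K * (E * Phi ξ) := by
            rw [h4]
            exact mul_le_mul (hs_upper ξ) hu (sq_nonneg _) hKpos.le
        _ = K * E * Phi ξ := by ring
    have hmono := intervalIntegral.integral_mono_ae_restrict
      (by norm_num : (-1:ℝ) ≤ 1) hint1 hint2 hae
    calc A ≤ ∫ ξ in (-1:ℝ)..1, K * E * Phi ξ := hmono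
      _ = K * E * IP := by rw [intervalIntegral.integral_const_mul, hIP]
  have hg0 : (g 0)^2 * M ≤ A := by nlinarith [hCS2, hM]
  -- final integration
  have hfinal : (∫ ξ in (-1:ℝ)..1, (g ξ)^2) ≤ 4 * ((g 0)^2) + 2*E*IP := by
    have hint1 : IntervalIntegrable (fun ξ => (g ξ)^2) volume (-1) 1 := by
      apply ContinuousOn.intervalIntegrable
      rw [huIcc2]
      exact hgc.pow 2
    have hint2 : IntervalIntegrable (fun ξ => 2*(g 0)^2 + 2*E*Phi ξ) volume (-1) 1 :=
      intervalIntegrable_const.add (Phi_integrable.const_mul _)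
    have hae : (fun ξ => (g ξ)^2)
        ≤ᵐ[volume.restrict (Icc (-1:ℝ) 1)] fun ξ => 2*(g 0)^2 + 2*E*Phi ξ := by
      filter_upwards [ae_restrict_mem measurableSet_Icc, ae_restrict_of_ae (ae_ne 1),
        ae_restrict_of_ae (ae_ne (-1))] with ξ h1 h2 h3
      have hio : ξ ∈ Ioo (-1:ℝ) 1 :=
        ⟨lt_of_le_of_ne h1.1 (Ne.symm h3), lt_of_le_of_ne h1.2 h2⟩
      have hu := hub ξ hio
      nlinarith [sq_nonneg (g ξ - 2 * g 0)]
    have hmono := intervalIntegral.integral_mono_ae_restrict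
      (by norm_num : (-1:ℝ) ≤ 1) hint1 hint2 hae
    have hsplit : (∫ ξ in (-1:ℝ)..1, (2*(g 0)^2 + 2*E*Phi ξ))
        = 2*(g 0)^2*2 + 2*E*IP := by
      rw [intervalIntegral.integral_add intervalIntegrable_const
        (Phi_integrable.const_mul _), intervalIntegral.integral_const,
        intervalIntegral.integral_const_mul, hIP]
      norm_num
      ring
    calc (∫ ξ in (-1:ℝ)..1, (g ξ)^2) ≤ ∫ ξ in (-1:ℝ)..1, (2*(g 0)^2 + 2*E*Phi ξ) := hmono
      _ = 2*(g 0)^2*2 + 2*E*IP := hsplit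
      _ ≤ 4*((g 0)^2) + 2*E*IP := by linarith
  have hlast : 4*((g 0)^2) + 2*E*IP ≤ (4*K*IP/M + 2*IP + 1) * E := by
    have hg0' : (g 0)^2 ≤ K*E*IP/M := by
      rw [le_div_iff₀ hM]
      linarith [hg0, hAle]
    have : 4*(K*E*IP/M) = (4*K*IP/M)*E := by ring
    nlinarith [hEnn, hg0']
  calc (∫ ξ in (-1:ℝ)..1, (g ξ)^2) ≤ 4*((g 0)^2) + 2*E*IP := hfinal
    _ ≤ (4*K*IP/M + 2*IP + 1) * E := hlast
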